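/- (Sum-over-classes bounds for JS in the limit π₁→1) With π₂ = 1−π₁ and normalization Z = h(π₂) = −π₂ log π₂: (a) ∑_{k=1}^K D_JS_π(e_k, e_1)/Z = (K−1)(1 + h(π₁)/h(π₂)) and this tends to K−1 as π₁ → 1⁻; (b) ∑_{k=1}^K D_JS_π(e_k, u)/Z also tends to K−1 as π₁ → 1⁻, where u is the uniform distribution. Hence the normalized bound difference B_U − B_L tends to 0 as π₁ → 1⁻. -/

import Mathlib

open Real Finset Filter

/-- Shannon entropy of a finite probability vector (convention `0 * log 0 = 0`). -/
noncomputable def shannonH {K : ℕ} (p : Fin K → ℝ) : ℝ := ∑ k, -(p k * Real.log (p k))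

/-- One-hot probability vector at class `c`. -/
noncomputable def onehot {K : ℕ} (c : Fin K) : Fin K → ℝ := fun k => if k = c then 1 else 0

/-- JS divergence with weights `[a, 1-a]`. -/
noncomputable def DJS {K : ℕ} (a : ℝ) (p q : Fin K → ℝ) : ℝ :=
  shannonH (fun k => a * p k + (1 - a) * q k) - a * shannonH p - (1 - a) * shannonH q

lemma shannonH_onehot {K : ℕ} (c : Fin K) : shannonH (onehot c) = 0 := by
  unfold shannonH onehot
  apply Finset.sum_eq_zero
  intro k _
  by_cases h : k = c <;> simp [h]

lemma mix_eq {K : ℕ} (a : ℝ) (c : Fin K) :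
    (fun j => a * onehot c j + (1 - a) * onehot c j) = onehot c := by
  funext j; by_cases h : j = c <;> simp [onehot, h]

lemma shannonH_mix {K : ℕ} (a : ℝ) {k c : Fin K} (hk : k ≠ c) :
    shannonH (fun j => a * onehot k j + (1 - a) * onehot c j)
      = -(a * Real.log a) + -((1 - a) * Real.log (1 - a)) := by
  unfold shannonH onehot
  rw [← Finset.sum_subset (Finset.subset_univ {k, c})]
  · rw [Finset.sum_pair hk]
    simp [hk, Ne.symm hk]
  · intro j _ hj
    simp only [Finset.mem_insert, Finset.mem_singleton, not_or] at hj
    simp [hj.1, hj.2]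

lemma sum_DJS_onehot {K : ℕ} (hK : 0 < K) (a : ℝ) :
    ∑ k, DJS a (onehot k) (onehot (⟨0, hK⟩ : Fin K))
      = ((K : ℝ) - 1) * (-(a * Real.log a) + -((1 - a) * Real.log (1 - a))) := by
  set c : Fin K := ⟨0, hK⟩
  have h1 : ∀ k : Fin K, DJS a (onehot k) (onehot c)
      = if k = c then 0 else -(a * Real.log a) + -((1 - a) * Real.log (1 - a)) := by
    intro k
    unfold DJS
    rw [shannonH_onehot, shannonH_onehot]
    by_cases h : k = c
    · subst h; rw [mix_eq, shannonH_onehot]; simp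
    · rw [shannonH_mix a h]; simp [h]
  rw [Finset.sum_congr rfl (fun k _ => h1 k)]
  have h2 : (∑ k : Fin K, if k = c then (0:ℝ)
        else -(a * Real.log a) + -((1 - a) * Real.log (1 - a)))
      = ∑ k : Fin K, ((-(a * Real.log a) + -((1 - a) * Real.log (1 - a)))
          - if k = c then -(a * Real.log a) + -((1 - a) * Real.log (1 - a)) else 0) := by
    apply Finset.sum_congr rfl; intro k _; by_cases h : k = c <;> simp [h]
  rw [h2, Finset.sum_sub_distrib, Finset.sum_const, Finset.sum_ite_eq' _ c, Finset.card_fin]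
  simp
  ring

lemma shannonH_unif {K : ℕ} (hK : 0 < K) :
    shannonH (fun _ : Fin K => (1:ℝ)/K) = Real.log K := by
  unfold shannonH
  rw [Finset.sum_const, Finset.card_fin]
  rw [Real.log_div one_ne_zero (by positivity), Real.log_one]
  field_simp
  have hK' : (K:ℝ) ≠ 0 := by positivity
  rw [nsmul_eq_mul, zero_sub, neg_div, neg_neg, mul_div_assoc', mul_div_cancel_left₀ _ hK']

lemma shannonH_mixu {K : ℕ} (a : ℝ) (k : Fin K) :
    shannonH (fun j => a * onehot k j + (1 - a) * ((1:ℝ)/K))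
      = -((a + (1-a)/K) * Real.log (a + (1-a)/K))
        + ((K:ℝ) - 1) * (-(((1-a)/K) * Real.log ((1-a)/K))) := by
  unfold shannonH onehot
  have h1 : ∀ j : Fin K, -((a * (if j = k then (1:ℝ) else 0) + (1 - a) * ((1:ℝ)/K)) *
      Real.log (a * (if j = k then (1:ℝ) else 0) + (1 - a) * ((1:ℝ)/K)))
      = (if j = k then (-((a + (1-a)/K) * Real.log (a + (1-a)/K)))
          else (-(((1-a)/K) * Real.log ((1-a)/K)))) := by
    intro j
    by_cases h : j = k <;> simp [h] <;> ring_nf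
  rw [Finset.sum_congr rfl (fun j _ => h1 j)]
  have h2 : (∑ j : Fin K, if j = k then (-((a + (1-a)/K) * Real.log (a + (1-a)/K)))
      else (-(((1-a)/K) * Real.log ((1-a)/K))))
      = ∑ j : Fin K, ((-(((1-a)/K) * Real.log ((1-a)/K)))
        + (if j = k then (-((a + (1-a)/K) * Real.log (a + (1-a)/K)))
            - (-(((1-a)/K) * Real.log ((1-a)/K))) else 0)) := by
    apply Finset.sum_congr rfl; intro j _; by_cases h : j = k <;> simp [h]
  rw [h2, Finset.sum_add_distrib, Finset.sum_const, Finset.sum_ite_eq' _ k, Finset.card_fin]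
  simp
  ring

lemma sum_DJS_unif {K : ℕ} (hK : 0 < K) (a : ℝ) :
    ∑ k, DJS a (onehot k) (fun _ : Fin K => (1:ℝ)/K)
      = (K:ℝ) * (-((a + (1-a)/K) * Real.log (a + (1-a)/K))
          + ((K:ℝ) - 1) * (-(((1-a)/K) * Real.log ((1-a)/K)))
          - (1 - a) * Real.log K) := by
  have h1 : ∀ k : Fin K, DJS a (onehot k) (fun _ : Fin K => (1:ℝ)/K)
      = -((a + (1-a)/K) * Real.log (a + (1-a)/K))
          + ((K:ℝ) - 1) * (-(((1-a)/K) * Real.log ((1-a)/K)))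
          - (1 - a) * Real.log K := by
    intro k
    unfold DJS
    rw [shannonH_onehot, shannonH_unif hK, shannonH_mixu]
    ring
  rw [Finset.sum_congr rfl (fun k _ => h1 k), Finset.sum_const, Finset.card_fin]
  simp [mul_comm]

lemma hx_bounds {x : ℝ} (hx0 : 0 < x) (hx1 : x ≤ 1) :
    0 ≤ -(x * Real.log x) ∧ -(x * Real.log x) ≤ 1 - x := by
  constructor
  · have := Real.log_nonpos hx0.le hx1
    nlinarith
  · have h1 : Real.log x⁻¹ ≤ x⁻¹ - 1 := Real.log_le_sub_one_of_pos (by positivity)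
    rw [Real.log_inv] at h1
    have h2 := mul_le_mul_of_nonneg_left h1 hx0.le
    have h3 : x * x⁻¹ = 1 := mul_inv_cancel₀ hx0.ne'
    nlinarith

lemma lem_top : Tendsto (fun a : ℝ => -Real.log (1 - a))
    (nhdsWithin 1 (Set.Ioo (0:ℝ) 1)) atTop := by
  have h1 : Tendsto (fun a : ℝ => 1 - a) (nhdsWithin 1 (Set.Ioo (0:ℝ) 1))
      (nhdsWithin 0 (Set.Ioi 0)) := by
    apply tendsto_nhdsWithin_of_tendsto_nhds_of_eventually_within
    · have hc : Continuous (fun a : ℝ => 1 - a) := by continuity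
      have h : Tendsto (fun a : ℝ => 1 - a) (nhds 1) (nhds 0) := by
        simpa using hc.tendsto (1:ℝ)
      exact h.mono_left nhdsWithin_le_nhds
    · filter_upwards [self_mem_nhdsWithin] with a ha
      exact sub_pos.mpr ha.2
  have h2 : Tendsto (fun a : ℝ => Real.log (1 - a)) (nhdsWithin 1 (Set.Ioo (0:ℝ) 1)) atBot :=
    Real.tendsto_log_nhdsGT_zero.comp h1
  exact tendsto_neg_atBot_atTop.comp h2

lemma lemA : Tendsto (fun a : ℝ => (-Real.log (1 - a))⁻¹)
    (nhdsWithin 1 (Set.Ioo (0:ℝ) 1)) (nhds 0) :=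
  lem_top.inv_tendsto_atTop

lemma hD_pos {a : ℝ} (ha : a ∈ Set.Ioo (0:ℝ) 1) : 0 < -((1 - a) * Real.log (1 - a)) := by
  have hlog : Real.log (1 - a) < 0 := Real.log_neg (by linarith [ha.1, ha.2]) (by linarith [ha.1])
  nlinarith [ha.2]

lemma hlog_ne {a : ℝ} (ha : a ∈ Set.Ioo (0:ℝ) 1) : Real.log (1 - a) ≠ 0 :=
  ne_of_lt (Real.log_neg (by linarith [ha.1, ha.2]) (by linarith [ha.1]))

lemma L1 : Tendsto (fun a : ℝ => -(a * Real.log a) / (-((1 - a) * Real.log (1 - a))))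
    (nhdsWithin 1 (Set.Ioo (0:ℝ) 1)) (nhds 0) := by
  apply tendsto_of_tendsto_of_tendsto_of_le_of_le' tendsto_const_nhds lemA
  · filter_upwards [self_mem_nhdsWithin] with a ha
    exact div_nonneg (hx_bounds ha.1 ha.2.le).1 (hD_pos ha).le
  · filter_upwards [self_mem_nhdsWithin] with a ha
    rw [div_le_iff₀ (hD_pos ha)]
    have key : (-Real.log (1 - a))⁻¹ * (-((1 - a) * Real.log (1 - a))) = 1 - a := by
      have := hlog_ne ha; field_simp
    rw [key]
    exact (hx_bounds ha.1 ha.2.le).2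

lemma LG {K : ℕ} (hK : 0 < K) :
    Tendsto (fun a : ℝ =>
      -((a + (1-a)/K) * Real.log (a + (1-a)/K)) / (-((1 - a) * Real.log (1 - a))))
    (nhdsWithin 1 (Set.Ioo (0:ℝ) 1)) (nhds 0) := by
  have hK1 : (1:ℝ) ≤ K := by exact_mod_cast hK
  have hm : ∀ a ∈ Set.Ioo (0:ℝ) 1, 0 < a + (1-a)/K ∧ a + (1-a)/K ≤ 1 := by
    intro a ha
    have h1a : (0:ℝ) < 1 - a := by linarith [ha.2]
    constructor
    · have : 0 ≤ (1-a)/K := by positivity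
      linarith [ha.1]
    · have : (1-a)/(K:ℝ) ≤ 1 - a := div_le_self h1a.le hK1
      linarith
  have hupper : Tendsto (fun a : ℝ => ((K:ℝ)-1)/K * (-Real.log (1 - a))⁻¹)
      (nhdsWithin 1 (Set.Ioo (0:ℝ) 1)) (nhds 0) := by
    simpa using lemA.const_mul (((K:ℝ)-1)/K)
  apply tendsto_of_tendsto_of_tendsto_of_le_of_le' tendsto_const_nhds hupper
  · filter_upwards [self_mem_nhdsWithin] with a ha
    exact div_nonneg (hx_bounds (hm a ha).1 (hm a ha).2).1 (hD_pos ha).le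
  · filter_upwards [self_mem_nhdsWithin] with a ha
    rw [div_le_iff₀ (hD_pos ha)]
    have hKne : (K:ℝ) ≠ 0 := by positivity
    have key : ((K:ℝ)-1)/K * (-Real.log (1 - a))⁻¹ * (-((1 - a) * Real.log (1 - a)))
        = ((K:ℝ)-1)/K * (1 - a) := by
      have := hlog_ne ha; field_simp
    rw [key]
    have hb := (hx_bounds (hm a ha).1 (hm a ha).2).2
    have hid : (1:ℝ) - (a + (1-a)/K) = ((K:ℝ)-1)/K * (1 - a) := by
      field_simp; ring
    linarith [hid ▸ hb]

lemma alg (Kr hm h2 lK t D A : ℝ) (hD : D ≠ 0) (he1 : Kr*h2 = D + t*lK) (hA : A*D = t) :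
    Kr*(hm + (Kr-1)*h2 - t*lK)/D = Kr*(hm/D) + (Kr-1)*(1 + lK*A) - Kr*lK*A := by
  field_simp
  linear_combination (Kr-1)*he1 + lK*hA

theorem js_bounds_coincide_in_limit {K : ℕ} (hK : 0 < K) :
    (∀ a ∈ Set.Ioo (0:ℝ) 1,
        (∑ k, DJS a (onehot k) (onehot ⟨0, hK⟩)) / (-((1 - a) * Real.log (1 - a)))
          = ((K : ℝ) - 1) * (1 + (-(a * Real.log a)) / (-((1 - a) * Real.log (1 - a)))))
    ∧ Tendsto (fun a : ℝ =>
        (∑ k, DJS a (onehot k) (onehot ⟨0, hK⟩)) / (-((1 - a) * Real.log (1 - a))))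
      (nhdsWithin 1 (Set.Ioo (0:ℝ) 1)) (nhds ((K : ℝ) - 1))
    ∧ Tendsto (fun a : ℝ =>
        (∑ k, DJS a (onehot k) (fun _ : Fin K => (1 : ℝ) / K)) / (-((1 - a) * Real.log (1 - a))))
      (nhdsWithin 1 (Set.Ioo (0:ℝ) 1)) (nhds ((K : ℝ) - 1))
    ∧ Tendsto (fun a : ℝ =>
        (∑ k, DJS a (onehot k) (onehot ⟨0, hK⟩)) / (-((1 - a) * Real.log (1 - a)))
          - (∑ k, DJS a (onehot k) (fun _ : Fin K => (1 : ℝ) / K))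
              / (-((1 - a) * Real.log (1 - a))))
      (nhdsWithin 1 (Set.Ioo (0:ℝ) 1)) (nhds 0) := by
  have hKne : (K:ℝ) ≠ 0 := by positivity
  -- part (a)
  have part1 : ∀ a ∈ Set.Ioo (0:ℝ) 1,
      (∑ k, DJS a (onehot k) (onehot (⟨0, hK⟩ : Fin K))) / (-((1 - a) * Real.log (1 - a)))
        = ((K : ℝ) - 1) * (1 + (-(a * Real.log a)) / (-((1 - a) * Real.log (1 - a)))) := by
    intro a ha
    rw [sum_DJS_onehot hK a]
    rw [mul_div_assoc, add_div, div_self (hD_pos ha).ne']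
    ring
  -- part (b)
  have part2 : Tendsto (fun a : ℝ =>
      (∑ k, DJS a (onehot k) (onehot (⟨0, hK⟩ : Fin K))) / (-((1 - a) * Real.log (1 - a))))
      (nhdsWithin 1 (Set.Ioo (0:ℝ) 1)) (nhds ((K : ℝ) - 1)) := by
    have h1 : Tendsto (fun a : ℝ =>
        ((K : ℝ) - 1) * (1 + (-(a * Real.log a)) / (-((1 - a) * Real.log (1 - a)))))
        (nhdsWithin 1 (Set.Ioo (0:ℝ) 1)) (nhds ((K : ℝ) - 1)) := by
      have hc : Tendsto (fun _ : ℝ => (1:ℝ)) (nhdsWithin 1 (Set.Ioo (0:ℝ) 1)) (nhds 1) :=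
        tendsto_const_nhds
      have := (hc.add L1).const_mul ((K:ℝ)-1)
      simpa using this
    apply h1.congr'
    filter_upwards [self_mem_nhdsWithin] with a ha
    exact (part1 a ha).symm
  -- part (c)
  have part3 : Tendsto (fun a : ℝ =>
      (∑ k, DJS a (onehot k) (fun _ : Fin K => (1 : ℝ) / K)) / (-((1 - a) * Real.log (1 - a))))
      (nhdsWithin 1 (Set.Ioo (0:ℝ) 1)) (nhds ((K : ℝ) - 1)) := by
    have h1 : Tendsto (fun a : ℝ =>
        (K:ℝ) * (-((a + (1-a)/K) * Real.log (a + (1-a)/K)) / (-((1 - a) * Real.log (1 - a))))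
        + ((K:ℝ)-1) * (1 + Real.log K * (-Real.log (1 - a))⁻¹)
        - (K:ℝ) * Real.log K * (-Real.log (1 - a))⁻¹)
        (nhdsWithin 1 (Set.Ioo (0:ℝ) 1)) (nhds ((K : ℝ) - 1)) := by
      have t1 := (LG hK).const_mul (K:ℝ)
      have hc : Tendsto (fun _ : ℝ => (1:ℝ)) (nhdsWithin 1 (Set.Ioo (0:ℝ) 1)) (nhds 1) :=
        tendsto_const_nhds
      have t2 := (hc.add (lemA.const_mul (Real.log K))).const_mul ((K:ℝ)-1)
      have t3 := lemA.const_mul ((K:ℝ) * Real.log K)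
      have := (t1.add t2).sub t3
      simpa using this
    apply h1.congr'
    filter_upwards [self_mem_nhdsWithin] with a ha
    rw [sum_DJS_unif hK a]
    have h1a : (0:ℝ) < 1 - a := by linarith [ha.2]
    have hlogd : Real.log ((1-a)/K) = Real.log (1-a) - Real.log K :=
      Real.log_div h1a.ne' hKne
    have hln := hlog_ne ha
    have he1 : (K:ℝ) * (-(((1-a)/K) * Real.log ((1-a)/K)))
        = -((1 - a) * Real.log (1 - a)) + (1-a) * Real.log K := by
      rw [hlogd]; field_simp; ring
    have hA : (-Real.log (1 - a))⁻¹ * (-((1 - a) * Real.log (1 - a))) = 1 - a := by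
      field_simp
    exact (alg (K:ℝ) _ _ _ _ _ _ (hD_pos ha).ne' he1 hA).symm
  refine ⟨part1, part2, part3, ?_⟩
  simpa using part2.sub part3
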